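/- Fix m>0. For K∈ℕ let μ_m^K be the probability measure on {(n_1,n_2)∈ℕ² : n_1+n_2=K} with μ_m^K(n, K−n) ∝ Γ(m/2+n)Γ(m/2+K−n)/(n!(K−n)!). Then as K→∞, the law of η_1/K under μ_m^K converges weakly to the Beta(m/2, m/2) distribution on [0,1]: for every x∈[0,1], μ_m^K(η_1 ≤ xK) → (Γ(m)/Γ(m/2)²) ∫_0^x y^{m/2−1}(1−y)^{m/2−1} dy. -/

import Mathlib

open Filter Topology MeasureTheory intervalIntegral
open scoped Classical

/-- The unnormalized canonical weight of `(n, K−n)` for the SIP on two sites: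
`Γ(m/2+n)Γ(m/2+K−n)/(n!(K−n)!)`. -/
noncomputable def sip2Weight (m : ℝ) (K n : ℕ) : ℝ :=
  Real.Gamma (m / 2 + n) * Real.Gamma (m / 2 + (K - n : ℕ)) /
    (n.factorial * (K - n).factorial)

/-- `μ_m^K(η₁ ≤ x K)`: the canonical probability that the first site carries at most
`x K` particles. -/
noncomputable def sip2CDF (m : ℝ) (K : ℕ) (x : ℝ) : ℝ :=
  (∑ n ∈ Finset.range (K + 1), if (n : ℝ) ≤ x * K then sip2Weight m K n else 0) /
    ∑ l ∈ Finset.range (K + 1), sip2Weight m K l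

lemma sip_ofReal_integrand {u v yy : ℝ} (h0 : 0 ≤ yy) (h1 : yy ≤ 1) :
    ((yy ^ (u - 1) * (1 - yy) ^ (v - 1) : ℝ) : ℂ)
      = (yy : ℂ) ^ ((u : ℂ) - 1) * (1 - (yy : ℂ)) ^ ((v : ℂ) - 1) := by
  have e1 : ((u : ℂ) - 1) = ((u - 1 : ℝ) : ℂ) := by push_cast; ring
  have e2 : ((v : ℂ) - 1) = ((v - 1 : ℝ) : ℂ) := by push_cast; ring
  have e3 : (1 - (yy : ℂ)) = ((1 - yy : ℝ) : ℂ) := by push_cast; ring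
  rw [e1, e2, e3, ← Complex.ofReal_cpow h0, ← Complex.ofReal_cpow (by linarith),
    Complex.ofReal_mul]

lemma sip_beta_integrable {u v : ℝ} (hu : 0 < u) (hv : 0 < v) :
    IntervalIntegrable (fun y : ℝ => y ^ (u - 1) * (1 - y) ^ (v - 1))
      MeasureTheory.volume 0 1 := by
  have h := Complex.betaIntegral_convergent (u := (u : ℂ)) (v := (v : ℂ))
    (by simpa using hu) (by simpa using hv)
  rw [intervalIntegrable_iff_integrableOn_Ioc_of_le (by norm_num)] at h ⊢
  have h2 : IntegrableOn
      (fun y : ℝ => Complex.re ((y : ℂ) ^ ((u : ℂ) - 1) * (1 - (y : ℂ)) ^ ((v : ℂ) - 1)))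
      (Set.Ioc 0 1) MeasureTheory.volume := h.re
  refine h2.congr_fun (fun y hy => ?_) measurableSet_Ioc
  dsimp only
  rw [← sip_ofReal_integrand hy.1.le hy.2]
  simp

lemma sip_beta_integral {u v : ℝ} (hu : 0 < u) (hv : 0 < v) :
    ∫ y in (0:ℝ)..1, y ^ (u - 1) * (1 - y) ^ (v - 1)
      = Real.Gamma u * Real.Gamma v / Real.Gamma (u + v) := by
  have hG : Real.Gamma (u + v) ≠ 0 := (Real.Gamma_pos_of_pos (by linarith)).ne'
  have key := Complex.Gamma_mul_Gamma_eq_betaIntegral (s := (u : ℂ)) (t := (v : ℂ))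
    (by simpa using hu) (by simpa using hv)
  have hbeta : Complex.betaIntegral u v
      = ((∫ y in (0:ℝ)..1, y ^ (u - 1) * (1 - y) ^ (v - 1) : ℝ) : ℂ) := by
    rw [Complex.betaIntegral, ← intervalIntegral.integral_ofReal]
    apply intervalIntegral.integral_congr
    intro yy hy
    rw [Set.uIcc_of_le (by norm_num : (0:ℝ) ≤ 1)] at hy
    exact (sip_ofReal_integrand hy.1 hy.2).symm
  rw [hbeta, ← Complex.ofReal_add, Complex.Gamma_ofReal, Complex.Gamma_ofReal,
    Complex.Gamma_ofReal, ← Complex.ofReal_mul, ← Complex.ofReal_mul] at key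
  have := Complex.ofReal_injective key
  field_simp at this ⊢
  linarith [this]

noncomputable def sipB (K n : ℕ) (y : ℝ) : ℝ := (K.choose n : ℝ) * y ^ n * (1 - y) ^ (K - n)

lemma sipB_eval (K n : ℕ) (y : ℝ) : (bernsteinPolynomial ℝ K n).eval y = sipB K n y := by
  simp [bernsteinPolynomial, sipB]

lemma sipB_nonneg {K n : ℕ} {y : ℝ} (h0 : 0 ≤ y) (h1 : y ≤ 1) : 0 ≤ sipB K n y := by
  have h2 : (0:ℝ) ≤ 1 - y := by linarith
  have h3 : (0:ℝ) ≤ (K.choose n : ℝ) := Nat.cast_nonneg _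
  exact mul_nonneg (mul_nonneg h3 (pow_nonneg h0 _)) (pow_nonneg h2 _)

lemma sipB_sum (K : ℕ) (y : ℝ) : ∑ n ∈ Finset.range (K + 1), sipB K n y = 1 := by
  have := bernsteinPolynomial.sum ℝ K
  have h := congrArg (Polynomial.eval y) this
  simpa [Polynomial.eval_finset_sum, sipB_eval] using h

lemma sipB_variance (K : ℕ) (y : ℝ) :
    ∑ n ∈ Finset.range (K + 1), ((K : ℝ) * y - n) ^ 2 * sipB K n y
      = (K : ℝ) * y * (1 - y) := by
  have := bernsteinPolynomial.variance ℝ K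
  have h := congrArg (Polynomial.eval y) this
  simp only [Polynomial.eval_finset_sum, Polynomial.eval_mul, Polynomial.eval_pow,
    Polynomial.eval_sub, Polynomial.eval_smul, Polynomial.eval_natCast, Polynomial.eval_X,
    Polynomial.eval_one, smul_eq_mul, sipB_eval] at h
  simpa [nsmul_eq_mul] using h

noncomputable def sipF (m y : ℝ) : ℝ := y ^ (m / 2 - 1) * (1 - y) ^ (m / 2 - 1)

noncomputable def sipS (x : ℝ) (K : ℕ) (y : ℝ) : ℝ :=
  ∑ n ∈ Finset.range (K + 1), if (n : ℝ) ≤ x * K then sipB K n y else 0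

lemma sipS_nonneg {x y : ℝ} (h0 : 0 ≤ y) (h1 : y ≤ 1) (K : ℕ) : 0 ≤ sipS x K y :=
  Finset.sum_nonneg fun n _ => by
    split
    · exact sipB_nonneg h0 h1
    · exact le_refl _
    
lemma sipS_le_one {x y : ℝ} (h0 : 0 ≤ y) (h1 : y ≤ 1) (K : ℕ) : sipS x K y ≤ 1 := by
  rw [← sipB_sum K y]
  refine Finset.sum_le_sum fun n _ => ?_
  split
  · exact le_refl _
  · exact sipB_nonneg h0 h1

lemma sip_cheb {K : ℕ} (hK : 0 < K) {y c : ℝ} (h0 : 0 ≤ y) (h1 : y ≤ 1) (hc : 0 < c)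
    (P : ℕ → Prop) [DecidablePred P]
    (hP : ∀ n, n ∈ Finset.range (K + 1) → ¬ P n → c * K ≤ |(K : ℝ) * y - n|) :
    ∑ n ∈ Finset.range (K + 1), (if P n then 0 else sipB K n y)
      ≤ y * (1 - y) / (c ^ 2 * K) := by
  have hKR : (0:ℝ) < K := by exact_mod_cast hK
  have hD : (0:ℝ) < (c * K) ^ 2 := by positivity
  have step : ∑ n ∈ Finset.range (K + 1), (if P n then 0 else sipB K n y)
      ≤ ∑ n ∈ Finset.range (K + 1), ((K : ℝ) * y - n) ^ 2 * sipB K n y / (c * K) ^ 2 := by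
    refine Finset.sum_le_sum fun n hn => ?_
    have hB := sipB_nonneg (K := K) (n := n) h0 h1
    split
    · positivity
    · rename_i hPn
      have habs := hP n hn hPn
      have hsq : (c * K) ^ 2 ≤ ((K : ℝ) * y - n) ^ 2 := by
        have h4 := pow_le_pow_left₀ (by positivity) habs 2
        rwa [sq_abs] at h4
      rw [le_div_iff₀ hD]
      calc sipB K n y * (c * K) ^ 2 ≤ sipB K n y * ((K : ℝ) * y - n) ^ 2 :=
            mul_le_mul_of_nonneg_left hsq hB
        _ = ((K : ℝ) * y - n) ^ 2 * sipB K n y := by ring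
  calc ∑ n ∈ Finset.range (K + 1), (if P n then 0 else sipB K n y)
      ≤ ∑ n ∈ Finset.range (K + 1), ((K : ℝ) * y - n) ^ 2 * sipB K n y / (c * K) ^ 2 := step
    _ = (∑ n ∈ Finset.range (K + 1), ((K : ℝ) * y - n) ^ 2 * sipB K n y) / (c * K) ^ 2 := by
        rw [Finset.sum_div]
    _ = (K : ℝ) * y * (1 - y) / (c * K) ^ 2 := by rw [sipB_variance]
    _ = y * (1 - y) / (c ^ 2 * K) := by
        field_simp

lemma sipS_tendsto_one {x y : ℝ} (h0 : 0 ≤ y) (h1 : y ≤ 1) (hyx : y < x) :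
    Filter.Tendsto (fun K : ℕ => sipS x K y) atTop (𝓝 1) := by
  have hc : 0 < x - y := by linarith
  set C := y * (1 - y) / (x - y) ^ 2 with hC
  have hlim : Filter.Tendsto (fun K : ℕ => 1 - C / K) atTop (𝓝 1) := by
    have := tendsto_const_div_atTop_nhds_zero_nat C
    simpa using tendsto_const_nhds.sub this
  refine tendsto_of_tendsto_of_tendsto_of_le_of_le' hlim tendsto_const_nhds ?_ ?_
  · filter_upwards [eventually_ge_atTop 1] with K hK
    have hKpos : 0 < K := hK
    have key := sip_cheb hKpos h0 h1 hc (P := fun n => (n : ℝ) ≤ x * K) ?_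
    · have hsplit : sipS x K y
          + ∑ n ∈ Finset.range (K + 1), (if (n : ℝ) ≤ x * K then 0 else sipB K n y)
          = 1 := by
        rw [sipS, ← Finset.sum_add_distrib, ← sipB_sum K y]
        refine Finset.sum_congr rfl fun n _ => ?_
        split <;> simp
      have : y * (1 - y) / ((x - y) ^ 2 * K) = C / K := by
        rw [hC, div_div]
      linarith [key, this ▸ key]
    · intro n _ hn
      have h2 : (x - y) * K ≤ (n : ℝ) - K * y := by
        have h5 : x * (K:ℝ) < n := not_le.mp hn
        nlinarith [Nat.cast_nonneg (α := ℝ) K]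
      calc (x - y) * K ≤ (n : ℝ) - K * y := h2
        _ ≤ |(K : ℝ) * y - n| := by
            rw [abs_sub_comm]
            exact le_abs_self _
  · filter_upwards with K
    exact sipS_le_one h0 h1 K

lemma sipS_tendsto_zero {x y : ℝ} (h0 : 0 ≤ y) (h1 : y ≤ 1) (hxy : x < y) (hx0 : 0 ≤ x) :
    Filter.Tendsto (fun K : ℕ => sipS x K y) atTop (𝓝 0) := by
  have hc : 0 < y - x := by linarith
  set C := y * (1 - y) / (y - x) ^ 2 with hC
  have hlim : Filter.Tendsto (fun K : ℕ => C / K) atTop (𝓝 0) :=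
    tendsto_const_div_atTop_nhds_zero_nat C
  refine tendsto_of_tendsto_of_tendsto_of_le_of_le' tendsto_const_nhds hlim ?_ ?_
  · filter_upwards with K
    exact sipS_nonneg h0 h1 K
  · filter_upwards [eventually_ge_atTop 1] with K hK
    have hKpos : 0 < K := hK
    have key := sip_cheb hKpos h0 h1 hc (P := fun n => ¬ ((n : ℝ) ≤ x * K)) ?_
    · have heq : sipS x K y
          = ∑ n ∈ Finset.range (K + 1), (if ¬ ((n : ℝ) ≤ x * K) then 0 else sipB K n y) := by
        refine Finset.sum_congr rfl fun n _ => ?_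
        split <;> simp_all
      have : y * (1 - y) / ((y - x) ^ 2 * K) = C / K := by rw [hC, div_div]
      rw [heq]
      linarith [this ▸ key]
    · intro n _ hn
      push_neg at hn
      have h2 : (y - x) * K ≤ (K : ℝ) * y - n := by
        nlinarith [Nat.cast_nonneg (α := ℝ) K]
      exact h2.trans (le_abs_self _)

lemma sip_ae_ne (c : ℝ) : ∀ᵐ (y : ℝ) ∂MeasureTheory.volume, y ≠ c := by
  refine MeasureTheory.ae_iff.mpr ?_
  simpa [Set.setOf_eq_eq_singleton] using Real.volume_singleton (a := c)

lemma sip_fB_eq {m : ℝ} {K n : ℕ} {y : ℝ} (h0 : 0 < y) (h1 : y < 1) :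
    sipF m y * sipB K n y
      = (K.choose n : ℝ) * (y ^ (m / 2 + n - 1) * (1 - y) ^ (m / 2 + (K - n : ℕ) - 1)) := by
  have h2 : 0 < 1 - y := by linarith
  rw [sipF, sipB]
  rw [show (y : ℝ) ^ n = y ^ ((n : ℕ) : ℝ) from (Real.rpow_natCast y n).symm,
    show ((1 - y) : ℝ) ^ (K - n) = (1 - y) ^ (((K - n : ℕ)) : ℝ) from
      (Real.rpow_natCast (1 - y) (K - n)).symm]
  rw [show m / 2 + (n : ℝ) - 1 = (m / 2 - 1) + (n : ℝ) by ring,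
    show m / 2 + ((K - n : ℕ) : ℝ) - 1 = (m / 2 - 1) + ((K - n : ℕ) : ℝ) by ring,
    Real.rpow_add h0, Real.rpow_add h2]
  ring

lemma sip_fB_integrable {m : ℝ} (hm : 0 < m) (K n : ℕ) :
    IntervalIntegrable (fun y : ℝ => sipF m y * sipB K n y) MeasureTheory.volume 0 1 := by
  have h := sip_beta_integrable (u := m / 2 + n) (v := m / 2 + (K - n : ℕ))
    (by positivity) (by positivity)
  rw [intervalIntegrable_iff_integrableOn_Ioc_of_le (by norm_num)] at h ⊢
  refine ((h.const_mul (K.choose n : ℝ)).congr ?_)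
  filter_upwards [ae_restrict_of_ae (sip_ae_ne 1), ae_restrict_mem measurableSet_Ioc]
    with y hy1 hy
  exact (sip_fB_eq hy.1 (lt_of_le_of_ne hy.2 hy1)).symm

lemma sip_fB_integral {m : ℝ} (hm : 0 < m) {K n : ℕ} (hn : n ≤ K) :
    ∫ y in (0:ℝ)..1, sipF m y * sipB K n y
      = (K.choose n : ℝ) *
        (Real.Gamma (m / 2 + n) * Real.Gamma (m / 2 + (K - n : ℕ)) / Real.Gamma (m + K)) := by
  have hsum : (m / 2 + n) + (m / 2 + ((K - n : ℕ) : ℝ)) = m + K := by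
    have : ((K - n : ℕ) : ℝ) = (K : ℝ) - n := by
      rw [Nat.cast_sub hn]
    rw [this]; ring
  have h1 : ∫ y in (0:ℝ)..1, sipF m y * sipB K n y
      = ∫ y in (0:ℝ)..1,
          (K.choose n : ℝ) * (y ^ (m / 2 + n - 1) * (1 - y) ^ (m / 2 + (K - n : ℕ) - 1)) := by
    apply intervalIntegral.integral_congr_ae
    rw [Set.uIoc_of_le (by norm_num : (0:ℝ) ≤ 1)]
    filter_upwards [sip_ae_ne 1] with y hy1 hy
    exact sip_fB_eq hy.1 (lt_of_le_of_ne hy.2 hy1)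
  rw [h1, intervalIntegral.integral_const_mul,
    sip_beta_integral (by positivity) (by positivity), hsum]

lemma sip_weight_eq {m : ℝ} (hm : 0 < m) {K n : ℕ} (hn : n ≤ K) :
    sip2Weight m K n
      = Real.Gamma (m + K) / (K.factorial : ℝ) *
        ∫ y in (0:ℝ)..1, sipF m y * sipB K n y := by
  rw [sip_fB_integral hm hn, sip2Weight, Nat.cast_choose ℝ hn]
  have hG : Real.Gamma (m + K) ≠ 0 := (Real.Gamma_pos_of_pos (by positivity)).ne'
  have hKf : (K.factorial : ℝ) ≠ 0 := by positivity
  have hnf : (n.factorial : ℝ) ≠ 0 := by positivity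
  have hKnf : ((K - n).factorial : ℝ) ≠ 0 := by positivity
  field_simp

lemma sipF_measurable (m : ℝ) : Measurable (sipF m) := by
  have h2 : Measurable (fun y : ℝ => y ^ (m / 2 - 1)) := by measurability
  have h3 : Measurable (fun y : ℝ => (1 - y) ^ (m / 2 - 1)) :=
    h2.comp (measurable_const.sub measurable_id)
  exact h2.mul h3

lemma sipS_measurable (x : ℝ) (K : ℕ) : Measurable (sipS x K) := by
  apply Finset.measurable_sum
  intro n _
  split
  · exact (measurable_const.mul (measurable_id.pow_const _)).mul
      ((measurable_const.sub measurable_id).pow_const _)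
  · exact measurable_const

lemma sip_cdf_eq {m : ℝ} (hm : 0 < m) (x : ℝ) (K : ℕ) :
    sip2CDF m K x
      = (∫ y in (0:ℝ)..1, sipF m y * sipS x K y) / ∫ y in (0:ℝ)..1, sipF m y := by
  have hcK : Real.Gamma (m + K) / (K.factorial : ℝ) ≠ 0 := by
    have h1 : 0 < Real.Gamma (m + K) := Real.Gamma_pos_of_pos (by positivity)
    have h2 : (0:ℝ) < K.factorial := by positivity
    positivity
  have hint : ∀ n : ℕ, IntervalIntegrable
      (fun y : ℝ => if (n : ℝ) ≤ x * K then sipF m y * sipB K n y else 0)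
      MeasureTheory.volume 0 1 := by
    intro n
    split
    · exact sip_fB_integrable hm K n
    · exact intervalIntegrable_const
  have hS : ∫ y in (0:ℝ)..1, sipF m y * sipS x K y
      = ∑ n ∈ Finset.range (K + 1),
          if (n : ℝ) ≤ x * K then ∫ y in (0:ℝ)..1, sipF m y * sipB K n y else 0 := by
    have heq : ∀ y : ℝ, sipF m y * sipS x K y
        = ∑ n ∈ Finset.range (K + 1),
            if (n : ℝ) ≤ x * K then sipF m y * sipB K n y else 0 := by
      intro y
      rw [sipS, Finset.mul_sum]
      exact Finset.sum_congr rfl fun n _ => by split <;> simp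
    rw [intervalIntegral.integral_congr (fun y _ => heq y),
      intervalIntegral.integral_finset_sum (fun n _ => hint n)]
    exact Finset.sum_congr rfl fun n _ => by split <;> simp
  have hA : ∑ n ∈ Finset.range (K + 1), ∫ y in (0:ℝ)..1, sipF m y * sipB K n y
      = ∫ y in (0:ℝ)..1, sipF m y := by
    rw [← intervalIntegral.integral_finset_sum (fun n _ => sip_fB_integrable hm K n)]
    apply intervalIntegral.integral_congr
    intro y _
    show ∑ n ∈ Finset.range (K + 1), sipF m y * sipB K n y = sipF m y
    rw [← Finset.mul_sum, sipB_sum, mul_one]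
  have hnum : ∑ n ∈ Finset.range (K + 1), (if (n : ℝ) ≤ x * K then sip2Weight m K n else 0)
      = Real.Gamma (m + K) / (K.factorial : ℝ)
        * ∫ y in (0:ℝ)..1, sipF m y * sipS x K y := by
    rw [hS, Finset.mul_sum]
    refine Finset.sum_congr rfl fun n hn => ?_
    have hnK : n ≤ K := Nat.lt_succ_iff.mp (Finset.mem_range.mp hn)
    split
    · exact sip_weight_eq hm hnK
    · simp
  have hden : ∑ l ∈ Finset.range (K + 1), sip2Weight m K l
      = Real.Gamma (m + K) / (K.factorial : ℝ) * ∫ y in (0:ℝ)..1, sipF m y := by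
    rw [← hA, Finset.mul_sum]
    exact Finset.sum_congr rfl fun n hn =>
      sip_weight_eq hm (Nat.lt_succ_iff.mp (Finset.mem_range.mp hn))
  rw [sip2CDF, hnum, hden, mul_div_mul_left _ _ hcK]


/-- **Beta limit for the SIP on two sites**: as `K → ∞`, the law of `η₁/K` under the
canonical measure `μ_m^K` converges weakly to the Beta`(m/2, m/2)` distribution, i.e.
`μ_m^K(η₁ ≤ xK) → (Γ(m)/Γ(m/2)²) ∫_0^x y^{m/2−1}(1−y)^{m/2−1} dy` for every `x ∈ [0,1]`. -/
theorem sip_two_site_beta_limit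
    (m : ℝ) (hm : 0 < m) (x : ℝ) (hx : x ∈ Set.Icc (0 : ℝ) 1) :
    Tendsto (fun K : ℕ => sip2CDF m K x) atTop
      (𝓝 (Real.Gamma m / (Real.Gamma (m / 2)) ^ 2 *
        ∫ y in (0 : ℝ)..x, y ^ (m / 2 - 1) * (1 - y) ^ (m / 2 - 1))) := by
  obtain ⟨hx0, hx1⟩ := hx
  have ha : 0 < m / 2 := by linarith
  have hGa : 0 < Real.Gamma (m / 2) := Real.Gamma_pos_of_pos ha
  have hGm : 0 < Real.Gamma m := Real.Gamma_pos_of_pos hm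
  have hI : ∫ y in (0:ℝ)..1, sipF m y = Real.Gamma (m / 2) ^ 2 / Real.Gamma m := by
    have := sip_beta_integral (u := m / 2) (v := m / 2) ha ha
    rw [show m / 2 + m / 2 = m by ring] at this
    rw [show (fun y : ℝ => sipF m y) = fun y : ℝ => y ^ (m / 2 - 1) * (1 - y) ^ (m / 2 - 1)
      from rfl]
    rw [this]; ring
  -- the dominated convergence step
  have hnum : Tendsto (fun K : ℕ => ∫ y in (0:ℝ)..1, sipF m y * sipS x K y) atTop
      (𝓝 (∫ y in (0:ℝ)..x, sipF m y)) := by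
    have hrw : ∀ K : ℕ, ∫ y in (0:ℝ)..1, sipF m y * sipS x K y
        = ∫ y, sipF m y * sipS x K y ∂(volume.restrict (Set.Ioc (0:ℝ) 1)) := fun K =>
      intervalIntegral.integral_of_le (by norm_num)
    have htarget : ∫ y in (0:ℝ)..x, sipF m y
        = ∫ y, Set.indicator (Set.Ioc 0 x) (sipF m) y ∂(volume.restrict (Set.Ioc (0:ℝ) 1)) := by
      rw [intervalIntegral.integral_of_le hx0, MeasureTheory.integral_indicator measurableSet_Ioc,
        Measure.restrict_restrict measurableSet_Ioc,
        Set.inter_eq_left.mpr (Set.Ioc_subset_Ioc le_rfl hx1)]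
    simp only [hrw, htarget]
    apply MeasureTheory.tendsto_integral_of_dominated_convergence (bound := sipF m)
    · intro K
      exact ((sipF_measurable m).mul (sipS_measurable x K)).aestronglyMeasurable
    · rw [← IntegrableOn, ← intervalIntegrable_iff_integrableOn_Ioc_of_le (by norm_num)]
      exact sip_beta_integrable ha ha
    · intro K
      filter_upwards [ae_restrict_mem measurableSet_Ioc] with y hy
      have hF : 0 ≤ sipF m y :=
        mul_nonneg (Real.rpow_nonneg hy.1.le _) (Real.rpow_nonneg (by linarith [hy.2]) _)
      have hS0 := sipS_nonneg (x := x) hy.1.le hy.2 K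
      have hS1 := sipS_le_one (x := x) hy.1.le hy.2 K
      rw [Real.norm_eq_abs, abs_of_nonneg (mul_nonneg hF hS0)]
      exact mul_le_of_le_one_right hF hS1
    · filter_upwards [ae_restrict_mem measurableSet_Ioc, ae_restrict_of_ae (sip_ae_ne x)]
        with y hy hyx
      rcases lt_or_gt_of_ne hyx with h | h
      · have hmem : y ∈ Set.Ioc 0 x := ⟨hy.1, h.le⟩
        rw [Set.indicator_of_mem hmem]
        simpa using tendsto_const_nhds.mul (sipS_tendsto_one hy.1.le hy.2 h)
      · rw [Set.indicator_of_notMem (fun hmem => absurd hmem.2 (not_le.mpr h))]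
        simpa using tendsto_const_nhds.mul (sipS_tendsto_zero hy.1.le hy.2 h hx0)
  have hfin := hnum.div_const (∫ y in (0:ℝ)..1, sipF m y)
  have hrw2 : (fun K : ℕ => (∫ y in (0:ℝ)..1, sipF m y * sipS x K y)
      / ∫ y in (0:ℝ)..1, sipF m y) = fun K : ℕ => sip2CDF m K x := by
    funext K
    exact (sip_cdf_eq hm x K).symm
  rw [hrw2] at hfin
  convert hfin using 2
  rw [hI]
  have : ∫ y in (0:ℝ)..x, y ^ (m / 2 - 1) * (1 - y) ^ (m / 2 - 1)
      = ∫ y in (0:ℝ)..x, sipF m y := rfl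
  rw [this]
  field_simp
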